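/- Let α > 0, γ_P > 0, γ_I > 0, let Ψ, Ψ_f : ℝ → ℝ^{3×3} and ε : ℝ → ℝ³ be continuous, and let ĩ : ℝ → ℝ³ and θ̃ : ℝ → ℝ³ be differentiable functions satisfying the error dynamics ĩ'(t) = −α·ĩ(t) + Ψ(t)·θ̃(t) and θ̃'(t) = −γ_P·Ψ(t)ᵀ·ĩ(t) − γ_I·Ψ_f(t)ᵀ·Ψ_f(t)·θ̃(t) + Ψ_f(t)ᵀ·ε(t). Then the function V(t) := (1/2)|ĩ(t)|² + (1/(2γ_P))|θ̃(t)|² is differentiable and satisfies, for all t, V'(t) = −α·|ĩ(t)|² − (γ_I/γ_P)·|Ψ_f(t)·θ̃(t)|² + (1/γ_P)·⟨Ψ_f(t)·θ̃(t), ε(t)⟩. -/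

import Mathlib

open Matrix

lemma key_transpose (A : Matrix (Fin 3) (Fin 3) ℝ) (u v : Fin 3 → ℝ) :
    ∑ j : Fin 3, u j * (Aᵀ *ᵥ v) j = ∑ j : Fin 3, (A *ᵥ u) j * v j := by
  simp only [Matrix.mulVec, dotProduct, Matrix.transpose_apply,
    Finset.mul_sum, Finset.sum_mul]
  rw [Finset.sum_comm]
  apply Finset.sum_congr rfl
  intro j _
  apply Finset.sum_congr rfl
  intro k _
  ring

theorem lyapunov_derivative_composite_identifier
    (α γP γI : ℝ) (hα : 0 < α) (hγP : 0 < γP) (hγI : 0 < γI)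
    (Ψ Ψf : ℝ → Matrix (Fin 3) (Fin 3) ℝ) (ε : ℝ → Fin 3 → ℝ)
    (hΨ : Continuous Ψ) (hΨf : Continuous Ψf) (hε : Continuous ε)
    (itil θtil : ℝ → Fin 3 → ℝ)
    (hitil : ∀ t : ℝ, HasDerivAt itil (-α • itil t + Ψ t *ᵥ θtil t) t)
    (hθtil : ∀ t : ℝ, HasDerivAt θtil
      (-γP • ((Ψ t)ᵀ *ᵥ itil t) - γI • ((Ψf t)ᵀ *ᵥ (Ψf t *ᵥ θtil t))
        + (Ψf t)ᵀ *ᵥ ε t) t) :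
    ∀ t : ℝ, HasDerivAt
      (fun τ => (1 / 2) * ∑ j : Fin 3, itil τ j ^ 2
        + (1 / (2 * γP)) * ∑ j : Fin 3, θtil τ j ^ 2)
      (-α * ∑ j : Fin 3, itil t j ^ 2
        - (γI / γP) * ∑ j : Fin 3, (Ψf t *ᵥ θtil t) j ^ 2
        + (1 / γP) * ∑ j : Fin 3, (Ψf t *ᵥ θtil t) j * ε t j) t := by
  intro t
  have hi := hasDerivAt_pi.mp (hitil t)
  have hθ := hasDerivAt_pi.mp (hθtil t)
  have h1 : HasDerivAt (fun τ => ∑ j : Fin 3, itil τ j ^ 2)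
      (∑ j : Fin 3, (2 : ℕ) * itil t j ^ 1 * (-α • itil t + Ψ t *ᵥ θtil t) j) t :=
    HasDerivAt.fun_sum fun j _ => (hi j).pow 2
  have h2 : HasDerivAt (fun τ => ∑ j : Fin 3, θtil τ j ^ 2)
      (∑ j : Fin 3, (2 : ℕ) * θtil t j ^ 1 *
        (-γP • ((Ψ t)ᵀ *ᵥ itil t) - γI • ((Ψf t)ᵀ *ᵥ (Ψf t *ᵥ θtil t))
          + (Ψf t)ᵀ *ᵥ ε t) j) t :=
    HasDerivAt.fun_sum fun j _ => (hθ j).pow 2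
  have h := (h1.const_mul ((1:ℝ)/2)).add (h2.const_mul ((1:ℝ)/(2*γP)))
  apply h.congr_deriv
  set a := itil t
  set b := θtil t
  have e1 : ∑ j : Fin 3, b j * ((Ψ t)ᵀ *ᵥ a) j = ∑ j : Fin 3, (Ψ t *ᵥ b) j * a j :=
    key_transpose (Ψ t) b a
  have e2 : ∑ j : Fin 3, b j * ((Ψf t)ᵀ *ᵥ (Ψf t *ᵥ b)) j
      = ∑ j : Fin 3, (Ψf t *ᵥ b) j ^ 2 := by
    rw [key_transpose (Ψf t) b (Ψf t *ᵥ b)]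
    exact Finset.sum_congr rfl fun j _ => (sq ((Ψf t *ᵥ b) j)).symm
  have e3 : ∑ j : Fin 3, b j * ((Ψf t)ᵀ *ᵥ ε t) j = ∑ j : Fin 3, (Ψf t *ᵥ b) j * ε t j :=
    key_transpose (Ψf t) b (ε t)
  have split1 : ∑ j : Fin 3, (2 : ℕ) * a j ^ 1 * (-α • a + Ψ t *ᵥ b) j
      = -(2 * α) * ∑ j : Fin 3, a j ^ 2 + 2 * ∑ j : Fin 3, a j * (Ψ t *ᵥ b) j := by
    rw [Finset.mul_sum, Finset.mul_sum, ← Finset.sum_add_distrib]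
    apply Finset.sum_congr rfl
    intro j _
    simp only [Pi.add_apply, Pi.smul_apply, smul_eq_mul]
    ring
  have split2 : ∑ j : Fin 3, (2 : ℕ) * b j ^ 1 *
      (-γP • ((Ψ t)ᵀ *ᵥ a) - γI • ((Ψf t)ᵀ *ᵥ (Ψf t *ᵥ b)) + (Ψf t)ᵀ *ᵥ ε t) j
      = -(2 * γP) * ∑ j : Fin 3, b j * ((Ψ t)ᵀ *ᵥ a) j
        - (2 * γI) * ∑ j : Fin 3, b j * ((Ψf t)ᵀ *ᵥ (Ψf t *ᵥ b)) j
        + 2 * ∑ j : Fin 3, b j * ((Ψf t)ᵀ *ᵥ ε t) j := by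
    rw [Finset.mul_sum, Finset.mul_sum, Finset.mul_sum, ← Finset.sum_sub_distrib,
      ← Finset.sum_add_distrib]
    apply Finset.sum_congr rfl
    intro j _
    simp only [Pi.add_apply, Pi.sub_apply, Pi.smul_apply, smul_eq_mul]
    ring
  rw [split1, split2, e1, e2, e3]
  have hT : ∑ j : Fin 3, a j * (Ψ t *ᵥ b) j = ∑ j : Fin 3, (Ψ t *ᵥ b) j * a j :=
    Finset.sum_congr rfl fun j _ => mul_comm _ _
  rw [hT]
  field_simp
  ring
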